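/- Let d ≥ 1 and let ρ be a symmetric probability measure on ℝ^d such that ρ(H) < 1/√e for every vector hyperplane H of ℝ^d. Then for every n ≥ d, the normalization constant Z_n = ∫_{D_n^+} exp((1/2)⟨(∑_{i=1}^n x_i ᵗx_i)^{-1}(∑_{i=1}^n x_i), ∑_{i=1}^n x_i⟩) ∏_{i=1}^n dρ(x_i) satisfies 0 < Z_n ≤ e^{n/2}; in particular the model μ̃_{n,ρ} is well-defined. -/

import Mathlib

open MeasureTheory Filter Matrix Real

noncomputable section

/-- `T_n(x) = ∑ i, x_i ᵗx_i`. -/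
def Tmat (d n : ℕ) (x : Fin n → Fin d → ℝ) : Matrix (Fin d) (Fin d) ℝ :=
  ∑ i, Matrix.vecMulVec (x i) (x i)

/-- `S_n(x) = x_1 + … + x_n`. -/
def Svec (d n : ℕ) (x : Fin n → Fin d → ℝ) : Fin d → ℝ := ∑ i, x i

/-- the Hamiltonian `(1/2)⟨T_n⁻¹ S_n, S_n⟩`. -/
def Hfun (d n : ℕ) (x : Fin n → Fin d → ℝ) : ℝ :=
  (1 / 2) * dotProduct ((Tmat d n x)⁻¹.mulVec (Svec d n x)) (Svec d n x)

/-- normalization constant `Z_n`. -/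
def Zconst (d : ℕ) (ρ : Measure (Fin d → ℝ)) (n : ℕ) : ℝ :=
  ∫ x : Fin n → Fin d → ℝ,
    Set.indicator {x | 0 < (Tmat d n x).det} (fun x => Real.exp (Hfun d n x)) x
    ∂ Measure.pi fun _ => ρ

/-- the Curie-Weiss model of SOC `μ̃_{n,ρ}`. -/
def CW (d : ℕ) (ρ : Measure (Fin d → ℝ)) (n : ℕ) : Measure (Fin n → Fin d → ℝ) :=
  (Measure.pi fun _ => ρ).withDensity fun x =>
    Set.indicator {x | 0 < (Tmat d n x).det}
      (fun x => ENNReal.ofReal (Real.exp (Hfun d n x) / Zconst d ρ n)) x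

/-- covariance matrix `Σ = ∫ z ᵗz dρ(z)`. -/
def covM (d : ℕ) (ρ : Measure (Fin d → ℝ)) : Matrix (Fin d) (Fin d) ℝ :=
  Matrix.of fun i j => ∫ z, z i * z j ∂ρ

/-- `M₄(z) = ∑ (∫ yᵢyⱼyₖyₗ dρ) zᵢzⱼzₖzₗ`. -/
def M4 (d : ℕ) (ρ : Measure (Fin d → ℝ)) (z : Fin d → ℝ) : ℝ :=
  ∑ i : Fin d, ∑ j : Fin d, ∑ k : Fin d, ∑ l : Fin d,
    (∫ y, y i * y j * y k * y l ∂ρ) * (z i * z j * z k * z l)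

/-- symmetric measure: invariant under `z ↦ -z`. -/
def SymMeas (d : ℕ) (ρ : Measure (Fin d → ℝ)) : Prop := ρ.map (fun z => -z) = ρ

/-- condition `(*)` : some Gaussian exponential moment. -/
def CondStar (d : ℕ) (ρ : Measure (Fin d → ℝ)) : Prop :=
  ∃ v₀ > (0:ℝ), Integrable (fun z => Real.exp (v₀ * dotProduct z z)) ρ

/-- the ρ-measure of every vector hyperplane is `< 1/√e`. -/
def HypLt (d : ℕ) (ρ : Measure (Fin d → ℝ)) : Prop :=
  ∀ s : Fin d → ℝ, s ≠ 0 →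
    ρ {z | dotProduct s z = 0} < ENNReal.ofReal (1 / Real.sqrt (Real.exp 1))

/-- non-degeneracy: the ρ-measure of every affine hyperplane is `< 1`. -/
def NonDeg (d : ℕ) (ρ : Measure (Fin d → ℝ)) : Prop :=
  ∀ s : Fin d → ℝ, s ≠ 0 → ∀ c : ℝ, ρ {z | dotProduct s z = c} < 1

-- positive square root of a positive semi-definite matrix (junk value otherwise).
open scoped Classical in
def psqrt (d : ℕ) (M : Matrix (Fin d) (Fin d) ℝ) : Matrix (Fin d) (Fin d) ℝ :=
  if h : M.PosSemidef then (h.1.eigenvectorUnitary : Matrix (Fin d) (Fin d) ℝ) *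
    diagonal ((↑) ∘ (√·) ∘ h.1.eigenvalues) * (star h.1.eigenvectorUnitary : Matrix (Fin d) (Fin d) ℝ)
    else 0

/-- Euclidean norm on `ℝ^d`. -/
def vnorm (d : ℕ) (v : Fin d → ℝ) : ℝ := Real.sqrt (dotProduct v v)

/-- Frobenius norm on `d × d` matrices. -/
def mnorm (d : ℕ) (M : Matrix (Fin d) (Fin d) ℝ) : ℝ :=
  Real.sqrt (∑ i : Fin d, ∑ j : Fin d, (M i j) ^ 2)

/-- the log-Laplace transform `Λ` of `(Z, Z ᵗZ)`, with values in `(-∞, +∞]`. -/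
def Lam (d : ℕ) (ρ : Measure (Fin d → ℝ)) (u : Fin d → ℝ)
    (A : Matrix (Fin d) (Fin d) ℝ) : EReal :=
  ENNReal.log (∫⁻ z, ENNReal.ofReal
    (Real.exp (dotProduct u z + dotProduct (A.mulVec z) z)) ∂ρ)

/-- the Cramér transform `I` of `(Z, Z ᵗZ)`. -/
def CramerI (d : ℕ) (ρ : Measure (Fin d → ℝ)) (x : Fin d → ℝ)
    (M : Matrix (Fin d) (Fin d) ℝ) : EReal :=
  ⨆ p : (Fin d → ℝ) × {A : Matrix (Fin d) (Fin d) ℝ // A.IsSymm},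
    ((dotProduct x p.1 + (M * (p.2 : Matrix (Fin d) (Fin d) ℝ)).trace : ℝ) : EReal)
      - Lam d ρ p.1 p.2

end


noncomputable section ZProofAux

lemma dotProduct_sum' {d : ℕ} {ι : Type*} (s : Finset ι) (v : Fin d → ℝ) (w : ι → Fin d → ℝ) :
    dotProduct v (∑ i ∈ s, w i) = ∑ i ∈ s, dotProduct v (w i) := by
  simp only [dotProduct, Finset.sum_apply, Finset.mul_sum]
  exact Finset.sum_comm

lemma tmat_mulVec {d n : ℕ} (x : Fin n → Fin d → ℝ) (v : Fin d → ℝ) :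
    Tmat d n x *ᵥ v = ∑ i, (dotProduct (x i) v) • x i := by
  ext j
  simp only [Tmat, Matrix.mulVec, dotProduct, Matrix.sum_apply,
    Matrix.vecMulVec_apply, Finset.sum_apply, Finset.sum_mul, Finset.mul_sum,
    Pi.smul_apply, smul_eq_mul]
  rw [Finset.sum_comm]
  congr 1; ext i; congr 1; ext l; ring

lemma dot_tmat {d n : ℕ} (x : Fin n → Fin d → ℝ) (v : Fin d → ℝ) :
    dotProduct v (Tmat d n x *ᵥ v) = ∑ i, (dotProduct (x i) v) ^ 2 := by
  rw [tmat_mulVec, dotProduct_sum']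
  refine Finset.sum_congr rfl fun i _ => ?_
  rw [dotProduct_smul, smul_eq_mul, dotProduct_comm, sq]

lemma dot_svec {d n : ℕ} (x : Fin n → Fin d → ℝ) (v : Fin d → ℝ) :
    dotProduct v (Svec d n x) = ∑ i, dotProduct (x i) v := by
  rw [Svec, dotProduct_sum']
  exact Finset.sum_congr rfl fun i _ => dotProduct_comm _ _

lemma hfun_bounds {d n : ℕ} (x : Fin n → Fin d → ℝ) (hdet : (Tmat d n x).det ≠ 0) :
    0 ≤ Hfun d n x ∧ Hfun d n x ≤ n / 2 := by
  set T := Tmat d n x with hT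
  set S := Svec d n x with hS
  set v := T⁻¹ *ᵥ S with hv
  have hTv : T *ᵥ v = S := by
    rw [hv, Matrix.mulVec_mulVec, Matrix.mul_nonsing_inv _ (isUnit_iff_ne_zero.2 hdet),
      Matrix.one_mulVec]
  have hq1 : dotProduct v S = ∑ i, (dotProduct (x i) v) ^ 2 := by
    rw [← hTv, dot_tmat]
  have hq2 : dotProduct v S = ∑ i, dotProduct (x i) v := dot_svec x v
  set q := dotProduct v S with hqdef
  have hq0 : 0 ≤ q := hq1 ▸ Finset.sum_nonneg fun i _ => sq_nonneg _
  have hcs : q ^ 2 ≤ n * q := by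
    calc q ^ 2 = (∑ i, dotProduct (x i) v) ^ 2 := by rw [hq2]
    _ ≤ ((Finset.univ : Finset (Fin n)).card : ℝ) * ∑ i, (dotProduct (x i) v) ^ 2 :=
        sq_sum_le_card_mul_sum_sq
    _ = n * q := by rw [← hq1]; simp
  have hqn : q ≤ n := by nlinarith
  have hH : Hfun d n x = (1 / 2) * q := rfl
  constructor
  · rw [hH]; linarith
  · rw [hH]; linarith

lemma single_smul' {d : ℕ} (j : Fin d) (c : ℝ) :
    Pi.single j c = c • (Pi.single j 1 : Fin d → ℝ) := by
  ext l; by_cases h : j = l <;> simp [Pi.single_apply, h]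

lemma exists_dot_eq_zero {d : ℕ} (V : Submodule ℝ (Fin d → ℝ)) (hV : V ≠ ⊤) :
    ∃ s : Fin d → ℝ, s ≠ 0 ∧ ∀ z ∈ V, dotProduct s z = 0 := by
  obtain ⟨f, hf0, hfV⟩ := V.exists_dual_map_eq_bot_of_lt_top (lt_top_iff_ne_top.2 hV)
    inferInstance
  have key : ∀ z : Fin d → ℝ, f z = ∑ j, f (Pi.single j 1) * z j := by
    intro z
    conv_lhs => rw [show z = ∑ j, Pi.single j (z j) from (Finset.univ_sum_single z).symm]
    rw [map_sum]
    refine Finset.sum_congr rfl fun j _ => ?_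
    rw [single_smul', _root_.map_smul, smul_eq_mul]; ring
  refine ⟨fun j => f (Pi.single j 1), ?_, ?_⟩
  · intro hs
    apply hf0
    refine LinearMap.ext fun z => ?_
    rw [key z, LinearMap.zero_apply]
    refine Finset.sum_eq_zero fun j _ => ?_
    have := congrFun hs j
    simp only [Pi.zero_apply] at this
    rw [this, zero_mul]
  · intro z hz
    have hfz : f z = 0 := by
      have : f z ∈ V.map f := Submodule.mem_map_of_mem hz
      rwa [hfV, Submodule.mem_bot] at this
    rw [dotProduct, ← key z, hfz]

lemma meas_submodule_lt_one {d : ℕ} (ρ : Measure (Fin d → ℝ)) [IsProbabilityMeasure ρ]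
    (hhyp : HypLt d ρ) (V : Submodule ℝ (Fin d → ℝ)) (hV : V ≠ ⊤) :
    ρ (V : Set (Fin d → ℝ)) < 1 := by
  obtain ⟨s, hs0, hsV⟩ := exists_dot_eq_zero V hV
  calc ρ (V : Set (Fin d → ℝ)) ≤ ρ {z | dotProduct s z = 0} :=
        measure_mono fun z hz => hsV z hz
    _ < ENNReal.ofReal (1 / Real.sqrt (Real.exp 1)) := hhyp s hs0
    _ < 1 := by
        rw [ENNReal.ofReal_lt_one]
        rw [div_lt_one (Real.sqrt_pos.2 (Real.exp_pos 1))]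
        calc (1:ℝ) = Real.sqrt 1 := (Real.sqrt_one).symm
          _ < Real.sqrt (Real.exp 1) := by
              apply Real.sqrt_lt_sqrt zero_le_one
              have := Real.exp_lt_exp.mpr (zero_lt_one (α := ℝ))
              rwa [Real.exp_zero] at this

def gram {d : ℕ} (k : ℕ) (y : Fin k → Fin d → ℝ) : Matrix (Fin k) (Fin k) ℝ :=
  Matrix.of fun i j => dotProduct (y i) (y j)

lemma gram_mulVec {d k : ℕ} (y : Fin k → Fin d → ℝ) (c : Fin k → ℝ) (i : Fin k) :
    (gram k y *ᵥ c) i = dotProduct (y i) (∑ j, c j • y j) := by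
  rw [dotProduct_sum']
  simp only [Matrix.mulVec, _root_.gram, Matrix.of_apply]
  refine Finset.sum_congr rfl fun j _ => ?_
  rw [dotProduct_smul, smul_eq_mul]
  exact mul_comm _ _

lemma gram_det_ne_zero_iff {d k : ℕ} (y : Fin k → Fin d → ℝ) :
    (gram k y).det ≠ 0 ↔ LinearIndependent ℝ y := by
  constructor
  · intro hdet
    rw [Fintype.linearIndependent_iff]
    intro c hc
    by_contra hne
    push_neg at hne
    obtain ⟨i, hi⟩ := hne
    have hc0 : c ≠ 0 := fun h => hi (by rw [h]; rfl)
    have hmv : gram k y *ᵥ c = 0 := by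
      ext i'
      rw [gram_mulVec, hc, dotProduct_zero]
      rfl
    exact hdet (Matrix.exists_mulVec_eq_zero_iff.1 ⟨c, hc0, hmv⟩)
  · intro hli
    intro hdet
    obtain ⟨v, hv0, hmv⟩ := Matrix.exists_mulVec_eq_zero_iff.2 hdet
    have hw : dotProduct (∑ i, v i • y i) (∑ i, v i • y i) = 0 := by
      have : ∀ i, dotProduct (y i) (∑ j, v j • y j) = 0 := by
        intro i
        have := congrFun hmv i
        rw [← gram_mulVec y v i] at *
        exact this
      calc dotProduct (∑ i, v i • y i) (∑ j, v j • y j)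
          = ∑ i, v i * dotProduct (y i) (∑ j, v j • y j) := by
            rw [dotProduct_comm, dotProduct_sum']
            refine Finset.sum_congr rfl fun i _ => ?_
            rw [dotProduct_smul, smul_eq_mul, dotProduct_comm]
        _ = 0 := Finset.sum_eq_zero fun i _ => by rw [this i, mul_zero]
    have hsum : (∑ i, v i • y i) = 0 := by
      have := dotProduct_self_eq_zero.1 hw
      exact this
    exact hv0 (funext fun i => Fintype.linearIndependent_iff.1 hli v hsum i)

lemma span_top_posdef {d n : ℕ} (x : Fin n → Fin d → ℝ)
    (hspan : Submodule.span ℝ (Set.range x) = ⊤) : (Tmat d n x).PosDef := by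
  rw [Matrix.posDef_iff_dotProduct_mulVec]
  constructor
  · -- IsHermitian
    ext i j
    simp only [Tmat, Matrix.conjTranspose_apply, Matrix.sum_apply, Matrix.vecMulVec_apply,
      star_trivial]
    exact Finset.sum_congr rfl fun l _ => mul_comm _ _
  · intro v hv0
    have key : ∃ i, dotProduct (x i) v ≠ 0 := by
      by_contra hall
      push_neg at hall
      have hmem : ∀ w : Fin d → ℝ, w ∈ Submodule.span ℝ (Set.range x) →
          dotProduct w v = 0 := by
        intro w hw
        induction hw using Submodule.span_induction with
        | mem w h => obtain ⟨i, rfl⟩ := h; exact hall i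
        | zero => exact zero_dotProduct v
        | add a b _ _ ha hb => rw [add_dotProduct, ha, hb, add_zero]
        | smul c a _ ha => rw [smul_dotProduct, ha, smul_zero]
      have : dotProduct v v = 0 := hmem v (hspan ▸ Submodule.mem_top)
      exact hv0 (dotProduct_self_eq_zero.1 this)
    obtain ⟨i0, hi0⟩ := key
    have : 0 < ∑ i, (dotProduct (x i) v) ^ 2 := by
      refine Finset.sum_pos' (fun i _ => sq_nonneg _) ⟨i0, Finset.mem_univ _, ?_⟩
      positivity
    simpa only [star_trivial, dot_tmat] using this

lemma det_tmat_pos_iff {d n : ℕ} (x : Fin n → Fin d → ℝ) :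
    0 < (Tmat d n x).det ↔ Submodule.span ℝ (Set.range x) = ⊤ := by
  constructor
  · intro hdet
    by_contra hspan
    obtain ⟨s, hs0, hsV⟩ := exists_dot_eq_zero _ hspan
    have hmv : Tmat d n x *ᵥ s = 0 := by
      rw [tmat_mulVec]
      refine Finset.sum_eq_zero fun i _ => ?_
      have : dotProduct (x i) s = 0 := by
        rw [dotProduct_comm]
        exact hsV (x i) (Submodule.subset_span ⟨i, rfl⟩)
      rw [this, zero_smul]
    have : (Tmat d n x).det = 0 := Matrix.exists_mulVec_eq_zero_iff.1 ⟨s, hs0, hmv⟩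
    exact hdet.ne' this
  · intro hspan
    exact (span_top_posdef x hspan).det_pos

lemma continuous_tmat {d n : ℕ} : Continuous fun x : Fin n → Fin d → ℝ => Tmat d n x := by
  apply continuous_matrix
  intro i j
  simp only [Tmat, Matrix.sum_apply, Matrix.vecMulVec_apply]
  exact continuous_finset_sum _ fun l _ => by fun_prop

lemma continuous_gram {d k : ℕ} : Continuous fun y : Fin k → Fin d → ℝ => gram k y := by
  apply continuous_matrix
  intro i j
  simp only [_root_.gram, Matrix.of_apply, dotProduct]
  exact continuous_finset_sum _ fun l _ => by fun_prop

lemma continuous_svec {d n : ℕ} : Continuous fun x : Fin n → Fin d → ℝ => Svec d n x := by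
  apply continuous_pi
  intro j
  simp only [Svec, Finset.sum_apply]
  exact continuous_finset_sum _ fun i _ => (continuous_apply j).comp (continuous_apply i)

lemma measurableSet_detpos {d n : ℕ} :
    MeasurableSet {x : Fin n → Fin d → ℝ | 0 < (Tmat d n x).det} :=
  measurableSet_lt measurable_const (continuous_tmat.matrix_det.measurable)

lemma measurable_hfun {d n : ℕ} : Measurable fun x : Fin n → Fin d → ℝ => Hfun d n x := by
  have hinv : ∀ j l : Fin d, Measurable fun x : Fin n → Fin d → ℝ => ((Tmat d n x)⁻¹) j l := by
    intro j l
    have heq : (fun x : Fin n → Fin d → ℝ => ((Tmat d n x)⁻¹) j l)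
        = fun x => ((Tmat d n x).det)⁻¹ * (Tmat d n x).adjugate j l := by
      funext x
      rw [Matrix.inv_def, Ring.inverse_eq_inv, Matrix.smul_apply, smul_eq_mul]
    rw [heq]
    exact (continuous_tmat.matrix_det.measurable.inv).mul
      ((continuous_tmat.matrix_adjugate.matrix_elem j l).measurable)
  have hsvec : ∀ j : Fin d, Measurable fun x : Fin n → Fin d → ℝ => Svec d n x j := fun j =>
    ((continuous_apply j).comp continuous_svec).measurable
  apply Measurable.const_mul
  simp only [dotProduct, Matrix.mulVec]
  apply Finset.measurable_sum
  intro j _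
  apply Measurable.mul
  · apply Finset.measurable_sum
    intro l _
    exact (hinv j l).mul (hsvec l)
  · exact hsvec j

lemma pi_succ_measure {α : Type*} [MeasurableSpace α] (ρ : Measure α) [IsProbabilityMeasure ρ]
    (k : ℕ) (S : Set (Fin (k+1) → α)) (hS : MeasurableSet S) :
    Measure.pi (fun _ : Fin (k+1) => ρ) S
      = ∫⁻ y, ρ {z | Fin.snoc y z ∈ S} ∂(Measure.pi fun _ : Fin k => ρ) := by
  set e := MeasurableEquiv.piFinSuccAbove (fun _ : Fin (k+1) => α) (Fin.last k) with he
  have hmp := measurePreserving_piFinSuccAbove (fun _ : Fin (k+1) => ρ) (Fin.last k)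
  have hsymm : ∀ p : α × (Fin k → α), e.symm p = Fin.snoc p.2 p.1 := by
    intro p
    show (Fin.insertNthEquiv (fun _ : Fin (k+1) => α) (Fin.last k)) p = _
    show (Fin.insertNthEquiv (fun _ : Fin (k+1) => α) (Fin.last k)) p = _
    rw [Fin.insertNthEquiv_last]
    rfl
  set T : Set (α × (Fin k → α)) := e.symm ⁻¹' S with hT
  have hTm : MeasurableSet T := e.symm.measurable hS
  have h1 : S = e ⁻¹' T := by
    rw [hT, ← Set.preimage_comp]
    simp [Function.comp_def]
  calc Measure.pi (fun _ : Fin (k+1) => ρ) S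
      = (ρ.prod (Measure.pi fun _ : Fin k => ρ)) T := by
        rw [h1, hmp.measure_preimage hTm.nullMeasurableSet]
    _ = ∫⁻ y, ρ ((fun z => (z, y)) ⁻¹' T) ∂(Measure.pi fun _ : Fin k => ρ) :=
        Measure.prod_apply_symm hTm
    _ = ∫⁻ y, ρ {z | Fin.snoc y z ∈ S} ∂(Measure.pi fun _ : Fin k => ρ) := by
        refine lintegral_congr fun y => ?_
        congr 1
        ext z
        simp only [Set.mem_preimage, hT, Set.mem_setOf_eq, hsymm]

lemma pi_succ_pos {α : Type*} [MeasurableSpace α] (ρ : Measure α) [IsProbabilityMeasure ρ]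
    (k : ℕ) (S : Set (Fin (k+1) → α)) (hS : MeasurableSet S)
    (G : Set (Fin k → α)) (hGpos : 0 < Measure.pi (fun _ : Fin k => ρ) G)
    (hslice : ∀ y ∈ G, 0 < ρ {z | Fin.snoc y z ∈ S}) :
    0 < Measure.pi (fun _ : Fin (k+1) => ρ) S := by
  rw [pi_succ_measure ρ k S hS]
  set e := MeasurableEquiv.piFinSuccAbove (fun _ : Fin (k+1) => α) (Fin.last k) with he
  have hsymm : ∀ p : α × (Fin k → α), e.symm p = Fin.snoc p.2 p.1 := by
    intro p
    show (Fin.insertNthEquiv (fun _ : Fin (k+1) => α) (Fin.last k)) p = _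
    show (Fin.insertNthEquiv (fun _ : Fin (k+1) => α) (Fin.last k)) p = _
    rw [Fin.insertNthEquiv_last]
    rfl
  have hTm : MeasurableSet (e.symm ⁻¹' S) := e.symm.measurable hS
  have hgm : Measurable fun y : Fin k → α => ρ {z | Fin.snoc y z ∈ S} := by
    have : ∀ y : Fin k → α, {z | Fin.snoc y z ∈ S} = (fun z => (z, y)) ⁻¹' (e.symm ⁻¹' S) := by
      intro y; ext z; simp [hsymm]
    simp_rw [this]
    exact measurable_measure_prodMk_right hTm
  rw [lintegral_pos_iff_support hgm]
  refine lt_of_lt_of_le hGpos (measure_mono ?_)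
  intro y hy
  exact (hslice y hy).ne'

lemma measurableSet_indep {d k : ℕ} :
    MeasurableSet {y : Fin k → Fin d → ℝ | LinearIndependent ℝ y} := by
  have h : {y : Fin k → Fin d → ℝ | LinearIndependent ℝ y}
      = (fun y : Fin k → Fin d → ℝ => (gram k y).det) ⁻¹' ({0}ᶜ) := by
    ext y
    simp only [Set.mem_setOf_eq, Set.mem_preimage, Set.mem_compl_iff, Set.mem_singleton_iff]
    exact (gram_det_ne_zero_iff y).symm
  rw [h]
  exact continuous_gram.matrix_det.measurable (measurableSet_singleton 0).compl

lemma indep_pos {d : ℕ} (ρ : Measure (Fin d → ℝ)) [IsProbabilityMeasure ρ]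
    (hhyp : HypLt d ρ) :
    ∀ k, k ≤ d → 0 < Measure.pi (fun _ : Fin k => ρ) {y | LinearIndependent ℝ y} := by
  intro k
  induction k with
  | zero =>
    intro _
    have h : {y : Fin 0 → Fin d → ℝ | LinearIndependent ℝ y} = Set.univ :=
      Set.eq_univ_of_forall fun y => linearIndependent_empty_type
    rw [h]
    simp
  | succ k ih =>
    intro hk1
    have hk : k ≤ d := Nat.le_of_succ_le hk1
    refine pi_succ_pos ρ k _ measurableSet_indep _ (ih hk) ?_
    intro y hy
    have hyi : LinearIndependent ℝ y := hy
    have hslice : {z | Fin.snoc y z ∈ {y : Fin (k+1) → Fin d → ℝ | LinearIndependent ℝ y}}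
        = (Submodule.span ℝ (Set.range y) : Set (Fin d → ℝ))ᶜ := by
      ext z
      simp only [Set.mem_setOf_eq, Set.mem_compl_iff, SetLike.mem_coe]
      rw [linearIndependent_fin_snoc]
      exact ⟨fun h => h.2, fun h => ⟨hyi, h⟩⟩
    rw [hslice]
    have hVne : Submodule.span ℝ (Set.range y) ≠ ⊤ := by
      intro htop
      have h1 : Module.finrank ℝ (Submodule.span ℝ (Set.range y)) = k := by
        rw [finrank_span_eq_card hyi]
        simp
      rw [htop, finrank_top] at h1
      rw [Module.finrank_fin_fun] at h1
      omega
    have hmeas : MeasurableSet (Submodule.span ℝ (Set.range y) : Set (Fin d → ℝ)) :=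
      (Submodule.span ℝ (Set.range y)).closed_of_finiteDimensional.measurableSet
    rw [measure_compl hmeas (measure_ne_top ρ _), measure_univ]
    exact tsub_pos_of_lt (meas_submodule_lt_one ρ hhyp _ hVne)

lemma detpos_meas_pos {d : ℕ} (hd : 1 ≤ d) (ρ : Measure (Fin d → ℝ)) [IsProbabilityMeasure ρ]
    (hhyp : HypLt d ρ) :
    ∀ n, d ≤ n → 0 < Measure.pi (fun _ : Fin n => ρ) {x | 0 < (Tmat d n x).det} := by
  refine Nat.le_induction ?_ ?_
  · -- base case n = d
    refine lt_of_lt_of_le (indep_pos ρ hhyp d le_rfl) (measure_mono ?_)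
    intro y hy
    have hyi : LinearIndependent ℝ y := hy
    rw [Set.mem_setOf_eq, det_tmat_pos_iff]
    apply Submodule.eq_top_of_finrank_eq
    rw [finrank_span_eq_card hyi, Module.finrank_fin_fun]
    simp
  · intro n hdn ih
    refine pi_succ_pos ρ n _ measurableSet_detpos _ ih ?_
    intro y hy
    have hspan : Submodule.span ℝ (Set.range y) = ⊤ := (det_tmat_pos_iff y).1 hy
    have h : {z | Fin.snoc y z ∈ {x : Fin (n+1) → Fin d → ℝ | 0 < (Tmat d (n+1) x).det}}
        = Set.univ := by
      refine Set.eq_univ_of_forall fun z => ?_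
      rw [Set.mem_setOf_eq, Set.mem_setOf_eq, det_tmat_pos_iff]
      rw [eq_top_iff, ← hspan]
      apply Submodule.span_mono
      rintro w ⟨i, rfl⟩
      exact ⟨Fin.castSucc i, by rw [Fin.snoc_castSucc]⟩
    rw [h, measure_univ]
    exact zero_lt_one

end ZProofAux

/-- the model is well defined: `0 < Z_n ≤ e^{n/2}` for all `n ≥ d`. -/
theorem Zconst_pos_le
    (d : ℕ) (hd : 1 ≤ d) (ρ : Measure (Fin d → ℝ)) [IsProbabilityMeasure ρ]
    (hsym : SymMeas d ρ) (hhyp : HypLt d ρ) :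
    ∀ n : ℕ, d ≤ n → 0 < Zconst d ρ n ∧ Zconst d ρ n ≤ Real.exp (n / 2) := by
  intro n hdn
  set μ := Measure.pi fun _ : Fin n => ρ with hμ
  set D := {x : Fin n → Fin d → ℝ | 0 < (Tmat d n x).det} with hD
  set f := D.indicator (fun x => Real.exp (Hfun d n x)) with hf
  have hfm : Measurable f := (measurable_hfun.exp).indicator measurableSet_detpos
  have hf_nonneg : ∀ x, 0 ≤ f x := fun x =>
    Set.indicator_nonneg (fun x _ => (Real.exp_pos _).le) x
  have hf_le : ∀ x, f x ≤ Real.exp (n / 2) := by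
    intro x
    rw [hf]
    by_cases hx : x ∈ D
    · rw [Set.indicator_of_mem hx]
      exact Real.exp_le_exp.2 (hfun_bounds x (ne_of_gt hx)).2
    · rw [Set.indicator_of_notMem hx]
      exact (Real.exp_pos _).le
  have hint : Integrable f μ := by
    refine Integrable.mono' (integrable_const (Real.exp (n / 2))) hfm.aestronglyMeasurable ?_
    exact ae_of_all _ fun x => by rw [Real.norm_eq_abs, abs_of_nonneg (hf_nonneg x)]; exact hf_le x
  have hg : Integrable (D.indicator fun _ => (1:ℝ)) μ :=
    (integrable_const (1:ℝ)).indicator measurableSet_detpos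
  have hle : ∀ x, D.indicator (fun _ => (1:ℝ)) x ≤ f x := by
    intro x
    by_cases hx : x ∈ D
    · rw [Set.indicator_of_mem hx, hf, Set.indicator_of_mem hx]
      exact Real.one_le_exp (hfun_bounds x (ne_of_gt hx)).1
    · rw [Set.indicator_of_notMem hx, hf, Set.indicator_of_notMem hx]
  have hZ : Zconst d ρ n = ∫ x, f x ∂μ := rfl
  constructor
  · rw [hZ]
    have h1 : (0:ℝ) < (μ D).toReal := by
      refine ENNReal.toReal_pos (detpos_meas_pos hd ρ hhyp n hdn).ne' (measure_ne_top μ D)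
    calc (0:ℝ) < (μ D).toReal := h1
      _ = ∫ x, D.indicator (fun _ => (1:ℝ)) x ∂μ := by
          rw [integral_indicator_const (1:ℝ) measurableSet_detpos, smul_eq_mul, mul_one]; rfl
      _ ≤ ∫ x, f x ∂μ := integral_mono hg hint hle
  · rw [hZ]
    calc ∫ x, f x ∂μ ≤ ∫ _, Real.exp (n / 2) ∂μ :=
          integral_mono hint (integrable_const _) hf_le
      _ = Real.exp (n / 2) := by simp
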